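/- arXiv:2512.04687 — 8 statements merged into one kernel-verified Lean document; each statement's English description precedes it below -/
import Mathlib

section
/- For every countably indexed family of P-labelled trees (indexed by the natural numbers), there exist indices m < n such that the m-th and n-th trees are equivalent, i.e., each embeds into the other. -/
/-- A `P`-labelled tree: a finite node set `N`, an edge relation `E` such that
`(N,E)` is a (rooted, directed) tree, and a `≤`-monotone labelling `λ : N → P`. -/
structure PTree (P : Type) [PartialOrder P] where
  N : Type
  [fin : Fintype N]
  E : N → N → Prop
  label : N → P
  isTree : ∃ r : N, (∀ n, Relation.ReflTransGen E r n) ∧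
      (∀ n, n ≠ r → ∃! m, E m n) ∧ (∀ n, ¬ E n r)
  mono : ∀ i j, E i j → label i ≤ label j

/-- A `P`-embedding of `T` into `T'`. -/
def TreeEmb {P : Type} [PartialOrder P] (T T' : PTree P) (f : T.N → T'.N) : Prop :=
  (∀ i j, T.E i j → Relation.ReflTransGen T'.E (f i) (f j)) ∧
  (∀ k, T.label k = T'.label (f k))

/-- Two `P`-labelled trees are equivalent if each `P`-embeds into the other. -/
def TreeEquiv {P : Type} [PartialOrder P] (T T' : PTree P) : Prop :=
  (∃ f, TreeEmb T T' f) ∧ (∃ g, TreeEmb T' T g)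

/-- A `P`-labelled tree is strict if labels strictly increase along edges. -/
def StrictTree {P : Type} [PartialOrder P] (T : PTree P) : Prop :=
  ∀ i j, T.E i j → T.label i < T.label j

/-- The subtrees of `T` rooted at `i` and at `j` are `P`-isomorphic. -/
def SubIso {P : Type} [PartialOrder P] (T : PTree P) (i j : T.N) : Prop :=
  ∃ g : {n : T.N // Relation.ReflTransGen T.E i n} ≃
        {n : T.N // Relation.ReflTransGen T.E j n},
    (∀ a b, T.E a.1 b.1 ↔ T.E (g a).1 (g b).1) ∧
    (∀ a, T.label a.1 = T.label (g a).1)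

/-- A `P`-isomorphism between labelled trees. -/
def PIso {P : Type} [PartialOrder P] (T T' : PTree P) : Prop :=
  ∃ e : T.N ≃ T'.N, (∀ i j, T.E i j ↔ T'.E (e i) (e j)) ∧
    (∀ k, T.label k = T'.label (e k))

attribute [instance] PTree.fin


namespace PT

open Relation
open scoped Classical

variable {P : Type} [PartialOrder P]

noncomputable def root (T : PTree P) : T.N := T.isTree.choose

lemma root_reach (T : PTree P) (n : T.N) : ReflTransGen T.E (root T) n :=
  T.isTree.choose_spec.1 n

lemma parent_unique (T : PTree P) {m m' n : T.N} (h : T.E m n) (h' : T.E m' n) : m = m' := by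
  have hn : n ≠ root T := by
    rintro rfl; exact T.isTree.choose_spec.2.2 m h
  obtain ⟨p, _, hu⟩ := T.isTree.choose_spec.2.1 n hn
  rw [hu m h, hu m' h']

lemma not_edge_root (T : PTree P) (n : T.N) : ¬ T.E n (root T) :=
  T.isTree.choose_spec.2.2 n

def iter {α : Type} (E : α → α → Prop) : ℕ → α → α → Prop
  | 0 => fun a b => a = b
  | (k+1) => fun a b => ∃ c, iter E k a c ∧ E c b

lemma reflTransGen_iff_iter {α : Type} {E : α → α → Prop} {a b : α} :
    ReflTransGen E a b ↔ ∃ k, iter E k a b := by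
  constructor
  · intro h
    induction h with
    | refl => exact ⟨0, rfl⟩
    | tail _ he ih => obtain ⟨k, hk⟩ := ih; exact ⟨k+1, _, hk, he⟩
  · rintro ⟨k, hk⟩
    induction k generalizing b with
    | zero => cases hk; exact .refl
    | succ k ih => obtain ⟨c, hc, he⟩ := hk; exact (ih hc).tail he

noncomputable def depth (T : PTree P) (n : T.N) : ℕ :=
  Nat.find (reflTransGen_iff_iter.1 (root_reach T n))

lemma depth_spec (T : PTree P) (n : T.N) : iter T.E (depth T n) (root T) n :=
  Nat.find_spec (reflTransGen_iff_iter.1 (root_reach T n))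

lemma depth_edge (T : PTree P) {m n : T.N} (h : T.E m n) : depth T m < depth T n := by
  have hs := depth_spec T n
  rcases hk : depth T n with _ | k
  · rw [hk] at hs; exact absurd (hs ▸ h) (not_edge_root T m)
  · rw [hk] at hs
    obtain ⟨c, hc, he⟩ := hs
    have : c = m := parent_unique T he h
    subst this
    have : depth T c ≤ k := Nat.find_le hc
    omega

lemma depth_mono (T : PTree P) {m n : T.N} (h : ReflTransGen T.E m n) :
    depth T m ≤ depth T n := by
  induction h with
  | refl => exact le_refl _
  | tail _ he ih => exact ih.trans (depth_edge T he).le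

lemma reach_antisymm (T : PTree P) {m n : T.N} (h : ReflTransGen T.E m n)
    (h' : ReflTransGen T.E n m) : m = n := by
  rcases h.cases_tail with rfl | ⟨c, hc, he⟩
  · rfl
  · have := (depth_mono T h').trans (depth_mono T hc)
    exact absurd (depth_edge T he) (by omega)

lemma reach_root (T : PTree P) {n : T.N} (h : ReflTransGen T.E n (root T)) : n = root T := by
  rcases h.cases_tail with rfl | ⟨c, _, he⟩
  · rfl
  · exact absurd he (not_edge_root T c)

/-- down-sets are chains -/
lemma reach_chain_aux (T : PTree P) : ∀ (d : ℕ) (c a b : T.N), depth T c = d →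
    ReflTransGen T.E a c →
    ReflTransGen T.E b c → ReflTransGen T.E a b ∨ ReflTransGen T.E b a := by
  intro d
  induction d using Nat.strong_induction_on with
  | _ d ih =>
  intro c a b hd ha hb
  rcases ha.cases_tail with rfl | ⟨m, hm, hem⟩
  · exact Or.inr hb
  rcases hb.cases_tail with rfl | ⟨m', hm', hem'⟩
  · exact Or.inl ha
  have hmm : m = m' := parent_unique T hem hem'
  subst hmm
  subst hd
  exact ih (depth T m) (depth_edge T hem) m a b rfl hm hm'

lemma reach_chain (T : PTree P) {c a b : T.N} (ha : ReflTransGen T.E a c)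
    (hb : ReflTransGen T.E b c) : ReflTransGen T.E a b ∨ ReflTransGen T.E b a :=
  reach_chain_aux T (depth T c) c a b rfl ha hb

lemma label_mono (T : PTree P) {m n : T.N} (h : ReflTransGen T.E m n) :
    T.label m ≤ T.label n := by
  induction h with
  | refl => exact le_refl _
  | tail _ he ih => exact ih.trans (T.mono _ _ he)

end PT

namespace PT
open Relation
open scoped Classical

variable {P : Type} [PartialOrder P]

/-- The set of minimal strict-label successors of `v`. -/
noncomputable def Mset (T : PTree P) (v : T.N) : Finset T.N :=
  Finset.univ.filter (fun w => ReflTransGen T.E v w ∧ T.label w ≠ T.label v ∧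
    ∀ x, ReflTransGen T.E v x → ReflTransGen T.E x w →
      T.label x = T.label v ∨ x = w)

lemma mem_Mset {T : PTree P} {v w : T.N} : w ∈ Mset T v ↔
    ReflTransGen T.E v w ∧ T.label w ≠ T.label v ∧
    ∀ x, ReflTransGen T.E v x → ReflTransGen T.E x w →
      T.label x = T.label v ∨ x = w := by
  simp [Mset]

lemma Mset_reach {T : PTree P} {v w : T.N} (h : w ∈ Mset T v) : ReflTransGen T.E v w :=
  (mem_Mset.1 h).1

/-- Lemma A : if `u ⊑ v` have equal labels, minimal strict successors of `v`
are minimal strict successors of `u`. -/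
lemma Mset_subset {T : PTree P} {u v : T.N} (huv : ReflTransGen T.E u v)
    (hl : T.label u = T.label v) : Mset T v ⊆ Mset T u := by
  intro w hw
  obtain ⟨hvw, hne, hmin⟩ := mem_Mset.1 hw
  refine mem_Mset.2 ⟨huv.trans hvw, hl ▸ hne, ?_⟩
  intro x hux hxw
  rcases reach_chain T hxw hvw with hxv | hvx
  · left
    have h1 : T.label u ≤ T.label x := label_mono T hux
    have h2 : T.label x ≤ T.label v := label_mono T hxv
    exact le_antisymm (hl ▸ h2) h1
  · rcases hmin x hvx hxw with h | h
    · exact Or.inl (h.trans hl.symm)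
    · exact Or.inr h

/-- An edge with a strictly different label lands in `Mset`. -/
lemma edge_mem_Mset {T : PTree P} {v w : T.N} (he : T.E v w)
    (hne : T.label w ≠ T.label v) : w ∈ Mset T v := by
  refine mem_Mset.2 ⟨ReflTransGen.single he, hne, ?_⟩
  intro x hvx hxw
  rcases hxw.cases_tail with rfl | ⟨c, hxc, hcw⟩
  · exact Or.inr rfl
  · have : c = v := parent_unique T hcw he
    subst this
    left
    congr 1
    exact (reach_antisymm T hvx hxc).symm

end PT

namespace PT
open Relation
open scoped Classical

variable {P : Type} [PartialOrder P]

def Code (P : Type) : ℕ → Type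
  | 0 => Unit
  | (k+1) => P × Finset (Code P k)

noncomputable instance codeFintype {P : Type} [Fintype P] : ∀ k, Fintype (Code P k)
  | 0 => inferInstanceAs (Fintype Unit)
  | (k+1) =>
    haveI : Fintype (Code P k) := codeFintype k
    haveI : DecidableEq (Code P k) := Classical.decEq _
    inferInstanceAs (Fintype (P × Finset (Code P k)))

noncomputable def code (T : PTree P) : (k : ℕ) → T.N → Code P k
  | 0, _ => ()
  | (k+1), v => ((T.label v, (Mset T v).image (code T k)) : P × Finset (Code P k))

noncomputable def proj : (k : ℕ) → Code P (k+1) → Code P k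
  | 0, _ => ()
  | (k+1), c => ((c.1, c.2.image (proj k)) : P × Finset (Code P k))

lemma proj_code (T : PTree P) : ∀ (k : ℕ) (v : T.N), proj k (code T (k+1) v) = code T k v := by
  intro k
  induction k with
  | zero => intro v; rfl
  | succ k ih =>
    intro v
    show ((T.label v, ((Mset T v).image (code T (k+1))).image (proj k)) : P × Finset (Code P k)) =
      ((T.label v, (Mset T v).image (code T k)) : P × Finset (Code P k))
    rw [Finset.image_image]
    congr 1
    exact Finset.image_congr (fun x _ => ih x)

lemma code_eq_mono {T T' : PTree P} {v : T.N} {v' : T'.N} :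
    ∀ {j k : ℕ}, j ≤ k → code T k v = code T' k v' → code T j v = code T' j v' := by
  intro j k hjk
  induction k with
  | zero => intro h; interval_cases j; exact h
  | succ k ih =>
    intro h
    rcases Nat.eq_or_lt_of_le hjk with rfl | hlt
    · exact h
    · have : code T k v = code T' k v' := by
        rw [← proj_code T k v, ← proj_code T' k v', h]
      exact ih (by omega) this

/-- the up-set of a label -/
noncomputable def U [Fintype P] (p : P) : Finset P := Finset.univ.filter (p ≤ ·)

lemma U_card_pos [Fintype P] (p : P) : 1 ≤ (U p).card :=
  Finset.card_pos.2 ⟨p, by simp [U]⟩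

lemma U_card_lt [Fintype P] {p q : P} (h : p < q) : (U q).card < (U p).card := by
  apply Finset.card_lt_card
  constructor
  · intro x hx
    simp only [U, Finset.mem_filter, Finset.mem_univ, true_and] at hx ⊢
    exact h.le.trans hx
  · intro hsub
    have : p ∈ U q := hsub (by simp [U])
    simp only [U, Finset.mem_filter] at this
    exact absurd (le_antisymm this.2 h.le) h.ne'

lemma U_card_le [Fintype P] (p : P) : (U p).card ≤ Fintype.card P :=
  Finset.card_le_univ _

end PT

namespace PT
open Relation
open scoped Classical

variable {P : Type} [PartialOrder P]

noncomputable def parentOf (T : PTree P) (v : T.N) (h : v ≠ root T) : T.N :=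
  (T.isTree.choose_spec.2.1 v h).choose

lemma parentOf_edge (T : PTree P) (v : T.N) (h : v ≠ root T) : T.E (parentOf T v h) v :=
  (T.isTree.choose_spec.2.1 v h).choose_spec.1

lemma parentOf_eq (T : PTree P) {m v : T.N} (h : v ≠ root T) (he : T.E m v) :
    parentOf T v h = m :=
  parent_unique T (parentOf_edge T v h) he

variable [Fintype P]

noncomputable def emb (T T' : PTree P) (v : T.N) : T'.N :=
  if h : v = root T then root T'
  else
    let u := parentOf T v h
    if T.label v = T.label u then emb T T' u
    else if h2 : ∃ w' ∈ Mset T' (emb T T' u),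
        code T' ((U (T.label u)).card) w' = code T ((U (T.label u)).card) v then
      h2.choose
    else root T'
  termination_by depth T v
  decreasing_by
    · exact depth_edge T (parentOf_edge T v h)
    · exact depth_edge T (parentOf_edge T v h)

def Inv (T T' : PTree P) (v : T.N) (v' : T'.N) : Prop :=
  T.label v = T'.label v' ∧
  (Mset T v).image (code T ((U (T.label v)).card)) ⊆
    (Mset T' v').image (code T' ((U (T.label v)).card))

lemma emb_inv (T T' : PTree P)
    (hφ : code T (Fintype.card P + 1) (root T) = code T' (Fintype.card P + 1) (root T')) :
    ∀ v, Inv T T' v (emb T T' v) := by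
  suffices h : ∀ (d : ℕ) (v : T.N), depth T v = d → Inv T T' v (emb T T' v) by
    intro v; exact h (depth T v) v rfl
  intro d
  induction d using Nat.strong_induction_on with
  | _ d ih =>
  intro v hd
  by_cases h : v = root T
  · subst h
    rw [emb, dif_pos rfl]
    have hle : (U (T.label (root T))).card + 1 ≤ Fintype.card P + 1 := by
      have := U_card_le (T.label (root T)); omega
    have hc := code_eq_mono hle hφ
    simp only [code, Code, Prod.mk.injEq] at hc
    exact ⟨hc.1, hc.1 ▸ hc.2.le⟩
  · set u := parentOf T v h with hu
    have heu : T.E u v := parentOf_edge T v h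
    have ihu : Inv T T' u (emb T T' u) := by
      subst hd; exact ih (depth T u) (depth_edge T heu) u rfl
    by_cases hlv : T.label v = T.label u
    · rw [emb, dif_neg h, if_pos hlv]
      refine ⟨hlv.trans ihu.1, ?_⟩
      have hMs : Mset T v ⊆ Mset T u :=
        Mset_subset (ReflTransGen.single heu) hlv.symm
      rw [hlv]
      exact (Finset.image_subset_image hMs).trans ihu.2
    · have hvM : v ∈ Mset T u := edge_mem_Mset heu hlv
      have h2 : ∃ w' ∈ Mset T' (emb T T' u),
          code T' ((U (T.label u)).card) w' = code T ((U (T.label u)).card) v := by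
        have : code T ((U (T.label u)).card) v ∈
            (Mset T u).image (code T ((U (T.label u)).card)) :=
          Finset.mem_image_of_mem _ hvM
        have := ihu.2 this
        rwa [Finset.mem_image] at this
      rw [emb, dif_neg h, if_neg hlv, dif_pos h2]
      obtain ⟨hw'M, hcw⟩ := h2.choose_spec
      have hlt : T.label u < T.label v :=
        lt_of_le_of_ne (T.mono _ _ heu) (Ne.symm hlv)
      have hklt : (U (T.label v)).card + 1 ≤ (U (T.label u)).card := U_card_lt hlt
      have hc := code_eq_mono hklt hcw.symm
      simp only [code, Code, Prod.mk.injEq] at hc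
      exact ⟨hc.1, hc.1 ▸ hc.2.le⟩

lemma treeEmb_emb (T T' : PTree P)
    (hφ : code T (Fintype.card P + 1) (root T) = code T' (Fintype.card P + 1) (root T')) :
    TreeEmb T T' (emb T T') := by
  constructor
  · intro a b he
    have hb : b ≠ root T := fun hb => not_edge_root T a (hb ▸ he)
    have hpa : parentOf T b hb = a := parentOf_eq T hb he
    by_cases hlv : T.label b = T.label (parentOf T b hb)
    · have e1 : emb T T' b = emb T T' (parentOf T b hb) := by
        rw [emb, dif_neg hb, if_pos hlv]
      rw [e1, hpa]
    · have hvM : b ∈ Mset T a := edge_mem_Mset (hpa ▸ parentOf_edge T b hb) (hpa ▸ hlv)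
      have ihu := emb_inv T T' hφ a
      have h2 : ∃ w' ∈ Mset T' (emb T T' (parentOf T b hb)),
          code T' ((U (T.label (parentOf T b hb))).card) w' =
          code T ((U (T.label (parentOf T b hb))).card) b := by
        rw [hpa]
        have : code T ((U (T.label a)).card) b ∈
            (Mset T a).image (code T ((U (T.label a)).card)) :=
          Finset.mem_image_of_mem _ hvM
        have := ihu.2 this
        rwa [Finset.mem_image] at this
      have e1 : emb T T' b = h2.choose := by
        rw [emb, dif_neg hb, if_neg hlv, dif_pos h2]
      rw [e1, ← hpa]
      exact Mset_reach h2.choose_spec.1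
  · intro k
    exact (emb_inv T T' hφ k).1

end PT


/-- every countable family of `P`-labelled trees contains
two equivalent trees with indices `m < n`. -/
theorem stmt0 (P : Type) [Fintype P] [PartialOrder P] (F : ℕ → PTree P) :
    ∃ m n : ℕ, m < n ∧ TreeEquiv (F m) (F n) := by
  classical
  obtain ⟨m, n, hne, heq⟩ := Finite.exists_ne_map_eq_of_infinite
    (fun i => PT.code (F i) (Fintype.card P + 1) (PT.root (F i)))
  have hequiv : TreeEquiv (F m) (F n) :=
    ⟨⟨_, PT.treeEmb_emb (F m) (F n) heq⟩, ⟨_, PT.treeEmb_emb (F n) (F m) heq.symm⟩⟩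
  rcases lt_or_gt_of_ne hne with h | h
  · exact ⟨m, n, h, hequiv⟩
  · exact ⟨n, m, h, ⟨hequiv.2, hequiv.1⟩⟩
end

section
/- Modulo the equivalence relation ∼ (mutual P-embeddability), there are only finitely many P-labelled trees. -/
namespace PTreeAux

open Relation
open scoped Classical

variable {P : Type} [PartialOrder P]

noncomputable def root (T : PTree P) : T.N := T.isTree.choose

lemma root_reach (T : PTree P) (n : T.N) : ReflTransGen T.E (root T) n :=
  T.isTree.choose_spec.1 n

lemma root_par (T : PTree P) (n : T.N) (h : n ≠ root T) : ∃! m, T.E m n :=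
  T.isTree.choose_spec.2.1 n h

lemma root_noedge (T : PTree P) (n : T.N) : ¬ T.E n (root T) :=
  T.isTree.choose_spec.2.2 n

noncomputable def par (T : PTree P) (n : T.N) : T.N :=
  if h : n = root T then n else (root_par T n h).exists.choose

lemma par_edge {T : PTree P} {n : T.N} (h : n ≠ root T) : T.E (par T n) n := by
  rw [par, dif_neg h]; exact (root_par T n h).exists.choose_spec

lemma edge_par {T : PTree P} {m n : T.N} (h : T.E m n) : m = par T n := by
  have hn : n ≠ root T := fun e => root_noedge T m (e ▸ h)
  exact (root_par T n hn).unique h (par_edge hn)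

lemma par_iter_root (T : PTree P) (n : T.N) : ∃ k, (par T)^[k] n = root T := by
  have h := root_reach T n
  induction h with
  | refl => exact ⟨0, rfl⟩
  | tail hab hbc ih =>
    obtain ⟨k, hk⟩ := ih
    refine ⟨k + 1, ?_⟩
    rw [Function.iterate_succ_apply, ← edge_par hbc]
    exact hk

noncomputable def depth (T : PTree P) (n : T.N) : ℕ := Nat.find (par_iter_root T n)

lemma depth_spec (T : PTree P) (n : T.N) : (par T)^[depth T n] n = root T :=
  Nat.find_spec (par_iter_root T n)

lemma depth_lt {T : PTree P} {m n : T.N} (h : T.E m n) : depth T m < depth T n := by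
  have hn : n ≠ root T := fun e => root_noedge T m (e ▸ h)
  have hk : depth T n ≠ 0 := by
    intro h0
    exact hn (by simpa [h0] using depth_spec T n)
  obtain ⟨k, hk'⟩ := Nat.exists_eq_succ_of_ne_zero hk
  have hm : (par T)^[k] m = root T := by
    have := depth_spec T n
    rw [hk', Function.iterate_succ_apply, ← edge_par h] at this
    exact this
  have : depth T m ≤ k := Nat.find_min' _ hm
  omega

lemma reach_depth_le {T : PTree P} {a b : T.N} (h : ReflTransGen T.E a b) :
    depth T a ≤ depth T b := by
  induction h with
  | refl => exact le_rfl
  | tail hab hbc ih => exact ih.trans (depth_lt hbc).le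

lemma not_edge_back {T : PTree P} {m n : T.N} (h : ReflTransGen T.E n m) (h2 : T.E m n) :
    False := by
  have := reach_depth_le h
  have := depth_lt h2
  omega

lemma eq_root {T : PTree P} {r' : T.N} (h : ∀ m, ¬ T.E m r') : r' = root T := by
  rcases (root_reach T r').cases_tail with h1 | ⟨c, _, hc⟩
  · exact h1
  · exact absurd hc (h c)

lemma label_ge (T : PTree P) (m : T.N) : T.label (root T) ≤ T.label m := by
  have h := root_reach T m
  induction h with
  | refl => exact le_rfl
  | tail hab hbc ih => exact ih.trans (T.mono _ _ hbc)

noncomputable def subtree (T : PTree P) (n : T.N) : PTree P where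
  N := {m : T.N // ReflTransGen T.E n m}
  E a b := T.E a.1 b.1
  label m := T.label m.1
  mono := fun i j h => T.mono _ _ h
  isTree := by
    refine ⟨⟨n, .refl⟩, ?_, ?_, ?_⟩
    · rintro ⟨m, hm⟩
      induction hm with
      | refl => exact .refl
      | tail hab hbc ih => exact .tail ih hbc
    · rintro ⟨m, hm⟩ hne
      have hm1 : m ≠ n := fun e => hne (Subtype.ext e)
      rcases hm.cases_tail with h1 | ⟨b, hb, hbm⟩
      · exact absurd h1 hm1
      · have hmr : m ≠ root T := by
          intro e; exact root_noedge T b (e ▸ hbm)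
        refine ⟨⟨b, hb⟩, hbm, ?_⟩
        rintro ⟨c, hc⟩ hcm
        have : c = par T m := edge_par hcm
        have : c = b := this.trans (edge_par hbm).symm
        exact Subtype.ext this
    · rintro ⟨m, hm⟩ hmn
      exact not_edge_back hm hmn

lemma subtree_root (T : PTree P) (n : T.N) :
    root (subtree T n) = ⟨n, .refl⟩ := by
  refine (eq_root ?_).symm
  rintro ⟨m, hm⟩ hmn
  exact not_edge_back hm hmn

lemma subtree_reach {T : PTree P} {n : T.N} {a b : (subtree T n).N}
    (h : ReflTransGen (subtree T n).E a b) : ReflTransGen T.E a.1 b.1 := by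
  induction h with
  | refl => exact .refl
  | tail hab hbc ih => exact .tail ih hbc

def Shape (P : Type) : ℕ → Type
  | 0 => PUnit
  | d + 1 => P × Finset (Shape P d)

noncomputable instance shapeFintype [Fintype P] : ∀ d, Fintype (Shape P d)
  | 0 => inferInstanceAs (Fintype PUnit)
  | d + 1 =>
    letI := shapeFintype d
    inferInstanceAs (Fintype (P × Finset (Shape P d)))

noncomputable def minStrict (T : PTree P) : Finset T.N :=
  Finset.univ.filter
    (fun m => T.label m ≠ T.label (root T) ∧ T.label (par T m) = T.label (root T))

noncomputable def shape [Fintype P] : (d : ℕ) → PTree P → Shape P d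
  | 0, _ => PUnit.unit
  | d + 1, T =>
    (T.label (root T), (minStrict T).image (fun m => shape d (subtree T m)))

noncomputable def msaAux (T : PTree P) : ℕ → T.N → T.N
  | 0, m => m
  | k + 1, m =>
    if T.label (par T m) = T.label (root T) then m else msaAux T k (par T m)

noncomputable def msa (T : PTree P) (m : T.N) : T.N := msaAux T (depth T m) m

lemma ne_root_of_label {T : PTree P} {m : T.N}
    (h : T.label m ≠ T.label (root T)) : m ≠ root T := fun e => h (by rw [e])

lemma depth_par {T : PTree P} {m : T.N} (h : m ≠ root T) :
    depth T m = depth T (par T m) + 1 := by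
  have h1 : depth T (par T m) < depth T m := depth_lt (par_edge h)
  have h2 : depth T m ≤ depth T (par T m) + 1 := by
    apply Nat.find_min'
    rw [Function.iterate_succ_apply]
    exact depth_spec T (par T m)
  omega

lemma msa_eq {T : PTree P} {m : T.N} (h : T.label m ≠ T.label (root T)) :
    msa T m = if T.label (par T m) = T.label (root T) then m
      else msa T (par T m) := by
  have hm := ne_root_of_label h
  rw [msa, depth_par hm, msaAux]
  split
  · rfl
  · rw [msa]

lemma msa_good {T : PTree P} : ∀ (k : ℕ) (m : T.N), depth T m ≤ k →
    T.label m ≠ T.label (root T) →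
    msa T m ∈ minStrict T ∧ ReflTransGen T.E (msa T m) m := by
  intro k
  induction k with
  | zero =>
    intro m hd h
    have h0 : depth T m = 0 := by omega
    have hs := depth_spec T m
    rw [h0] at hs
    exact absurd (by simpa using hs) (ne_root_of_label h)
  | succ k ih =>
    intro m hd h
    have hm := ne_root_of_label h
    rw [msa_eq h]
    split
    · rename_i hpar
      constructor
      · simp [minStrict, h, hpar]
      · exact .refl
    · rename_i hpar
      have hdp : depth T (par T m) ≤ k := by
        have := depth_par hm; omega
      have hlab : T.label (par T m) ≠ T.label (root T) := hpar
      obtain ⟨h1, h2⟩ := ih (par T m) hdp hlab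
      exact ⟨h1, h2.tail (par_edge hm)⟩

lemma msa_mem {T : PTree P} {m : T.N} (h : T.label m ≠ T.label (root T)) :
    msa T m ∈ minStrict T := (msa_good (depth T m) m le_rfl h).1

lemma msa_reach {T : PTree P} {m : T.N} (h : T.label m ≠ T.label (root T)) :
    ReflTransGen T.E (msa T m) m := (msa_good (depth T m) m le_rfl h).2

lemma emb_of_shape [Fintype P] : ∀ (d : ℕ) (T T' : PTree P),
    (Finset.univ.filter (fun q => T.label (root T) ≤ q)).card ≤ d →
    shape d T = shape d T' → ∃ f, TreeEmb T T' f := by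
  intro d
  induction d with
  | zero =>
    intro T T' hcard _
    exfalso
    have : T.label (root T) ∈ Finset.univ.filter (fun q => T.label (root T) ≤ q) := by
      simp
    have := Finset.card_pos.mpr ⟨_, this⟩
    omega
  | succ d ih =>
    intro T T' hcard hsh
    rw [shape, shape] at hsh
    obtain ⟨hp, hs⟩ := Prod.mk.inj (α := P) (β := Finset (Shape P d)) hsh
    have H : ∀ n ∈ minStrict T, ∃ g : (subtree T n).N → T'.N,
        (∀ a b, (subtree T n).E a b → ReflTransGen T'.E (g a) (g b)) ∧
        (∀ a, (subtree T n).label a = T'.label (g a)) := by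
      intro n hn
      have hmem : shape d (subtree T n) ∈
          (minStrict T').image (fun m => shape d (subtree T' m)) := by
        rw [← hs]
        exact Finset.mem_image_of_mem _ hn
      obtain ⟨n', hn', hshn⟩ := Finset.mem_image.mp hmem
      have hlab : T.label (root T) < T.label n := by
        rcases Finset.mem_filter.mp hn with ⟨-, hne, -⟩
        exact lt_of_le_of_ne (label_ge T n) (Ne.symm hne)
      have hcard' : (Finset.univ.filter
          (fun q => (subtree T n).label (root (subtree T n)) ≤ q)).card ≤ d := by
        rw [subtree_root]
        have hsub : Finset.univ.filter (fun q => (subtree T n).label ⟨n, .refl⟩ ≤ q) ⊆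
            (Finset.univ.filter (fun q => T.label (root T) ≤ q)).erase (T.label (root T)) := by
          intro q hq
          rcases Finset.mem_filter.mp hq with ⟨-, hq'⟩
          refine Finset.mem_erase.mpr ⟨?_, ?_⟩
          · intro e
            rw [e] at hq'
            exact absurd (lt_of_lt_of_le hlab hq') (lt_irrefl _)
          · exact Finset.mem_filter.mpr ⟨Finset.mem_univ _, (le_of_lt hlab).trans hq'⟩
        have hmem2 : T.label (root T) ∈
            Finset.univ.filter (fun q => T.label (root T) ≤ q) := by simp
        have := Finset.card_le_card hsub
        rw [Finset.card_erase_of_mem hmem2] at this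
        omega
      obtain ⟨f0, hf0⟩ := ih (subtree T n) (subtree T' n') hcard' hshn.symm
      refine ⟨fun a => (f0 a).1, ?_, ?_⟩
      · intro a b hab
        exact subtree_reach (hf0.1 a b hab)
      · intro a
        exact hf0.2 a
    choose g hg1 hg2 using H
    refine ⟨fun m =>
      if h : T.label m = T.label (root T) then root T'
      else g (msa T m) (msa_mem h) ⟨m, msa_reach h⟩, ?_, ?_⟩
    · intro i j hij
      dsimp only
      by_cases hj : T.label j = T.label (root T)
      · have hi : T.label i = T.label (root T) :=
          le_antisymm (hj ▸ T.mono i j hij) (label_ge T i)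
        rw [dif_pos hi, dif_pos hj]
      · rw [dif_neg hj]
        by_cases hi : T.label i = T.label (root T)
        · rw [dif_pos hi]
          exact root_reach T' _
        · rw [dif_neg hi]
          have hpar : par T j = i := (edge_par hij).symm
          have hmsa : msa T j = msa T i := by
            rw [msa_eq hj, hpar, if_neg hi]
          have hij' : (subtree T (msa T i)).E ⟨i, msa_reach hi⟩
              ⟨j, hmsa ▸ msa_reach hj⟩ := hij
          have := hg1 (msa T i) (msa_mem hi) _ _ hij'
          convert this using 3 <;> exact (by
            have key : ∀ (a b : T.N) (hab : a = b) (pa : a ∈ minStrict T) (pb : b ∈ minStrict T)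
                (x : (subtree T a).N) (y : (subtree T b).N), x.1 = y.1 → g a pa x = g b pb y := by
              intro a b hab pa pb x y hxy
              subst hab
              exact congrArg (g a pa) (Subtype.ext hxy)
            exact key _ _ hmsa _ _ _ _ rfl)
    · intro k
      dsimp only
      by_cases h : T.label k = T.label (root T)
      · rw [dif_pos h, h, hp]
      · rw [dif_neg h]
        exact hg2 (msa T k) (msa_mem h) ⟨k, msa_reach h⟩

end PTreeAux

/-- modulo mutual embeddability, there are only finitely many
`P`-labelled trees. -/
theorem stmt1 (P : Type) [Fintype P] [PartialOrder P] :
    ∃ (k : ℕ) (reps : Fin k → PTree P),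
      ∀ T : PTree P, ∃ a : Fin k, TreeEquiv T (reps a) := by
  classical
  rcases isEmpty_or_nonempty (PTree P) with hE | hNE
  · exact ⟨0, Fin.elim0, fun T => (hE.false T).elim⟩
  · set d := Fintype.card P with hd
    let I := PTreeAux.Shape P d
    let ι : PTree P → I := PTreeAux.shape d
    have key : ∀ (A B : PTree P), ι A = ι B → ∃ f, TreeEmb A B f := by
      intro A B h
      refine PTreeAux.emb_of_shape d A B ?_ h
      calc (Finset.univ.filter (fun q => A.label (PTreeAux.root A) ≤ q)).card
          ≤ Finset.univ.card := Finset.card_le_card (Finset.filter_subset _ _)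
        _ = d := by rw [Finset.card_univ, hd]
    let e := Fintype.equivFin I
    refine ⟨Fintype.card I, fun a =>
      if h : ∃ T : PTree P, ι T = e.symm a then h.choose else Classical.arbitrary _,
      fun T => ?_⟩
    refine ⟨e (ι T), ?_⟩
    dsimp only
    have hx : ∃ T0 : PTree P, ι T0 = e.symm (e (ι T)) := ⟨T, by simp⟩
    rw [dif_pos hx]
    have h0 : ι hx.choose = ι T := by
      have h1 := hx.choose_spec
      have h2 : e.symm (e (ι T)) = ι T := Equiv.symm_apply_apply e (ι T)
      exact h1.trans h2
    exact ⟨key T hx.choose h0.symm, key hx.choose T h0⟩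
end

section
/- If a P-labelled tree (N,E,λ) has a duplicate (i,j), i.e., i E j and λ(i) = λ(j), then deleting node j and redirecting the children of j to be children of i yields a P-labelled tree (N',E',λ') with N' ⊊ N that is ∼-equivalent to (N,E,λ). -/
/-- eliminating a duplicate `(i,j)` (with `i E j` and equal labels)
by deleting `j` and redirecting its children to `i` yields a `P`-labelled tree
on the strictly smaller node set `N \ {j}` that is `∼`-equivalent to `T`. -/
theorem stmt3 (P : Type) [Fintype P] [PartialOrder P] (T : PTree P) (i j : T.N)
    (hE : T.E i j) (hlab : T.label i = T.label j) :
    ∃ (T' : PTree P) (e : T'.N ≃ {k : T.N // k ≠ j}),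
      (∀ k l : T'.N, T'.E k l ↔ (T.E (e k).1 (e l).1 ∨ ((e k).1 = i ∧ T.E j (e l).1))) ∧
      (∀ k : T'.N, T'.label k = T.label (e k).1) ∧
      TreeEquiv T T' := by
  classical
  have : Fintype T.N := T.fin
  obtain ⟨r, hr, hu, hnr⟩ := T.isTree
  have hjr : j ≠ r := fun h => hnr i (h ▸ hE)
  have hpar : ∀ {a b n : T.N}, n ≠ r → T.E a n → T.E b n → a = b := by
    intro a b n hn ha hb
    obtain ⟨m, -, hm⟩ := hu n hn
    rw [hm a ha, hm b hb]
  have hij : i ≠ j := by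
    intro h
    have key : ∀ n, Relation.ReflTransGen T.E r n → n ≠ j := by
      intro n hn
      induction hn with
      | refl => exact Ne.symm hjr
      | tail _ he ih =>
        intro hb; subst hb
        exact ih ((hpar hjr he hE).trans h)
    exact key j (hr j) rfl
  have hEjj : ∀ b, T.E j b → b ≠ j := by
    intro b hb h; subst h; exact hij (hpar hjr hE hb)
  -- the new edge relation on the subtype
  set E' : {k : T.N // k ≠ j} → {k : T.N // k ≠ j} → Prop :=
    fun k l => T.E k.1 l.1 ∨ (k.1 = i ∧ T.E j l.1) with hE'
  set φ : T.N → {k : T.N // k ≠ j} := fun n => if h : n = j then ⟨i, hij⟩ else ⟨n, h⟩ with hφ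
  have hφj : φ j = ⟨i, hij⟩ := dif_pos rfl
  have hφn : ∀ (n : T.N) (h : n ≠ j), φ n = ⟨n, h⟩ := fun n h => dif_neg h
  have femb : ∀ a b, T.E a b → Relation.ReflTransGen E' (φ a) (φ b) := by
    intro a b hab
    by_cases hbj : b = j
    · have ha : a = i := hpar hjr (hbj ▸ hab) hE
      have haj : a ≠ j := fun h => hij (ha.symm.trans h)
      rw [hφn a haj, hbj, hφj]
      subst ha
      exact Relation.ReflTransGen.refl
    · rw [hφn b hbj]
      by_cases haj : a = j
      · subst haj
        rw [hφj]
        exact Relation.ReflTransGen.single (Or.inr ⟨rfl, hab⟩)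
      · rw [hφn a haj]
        exact Relation.ReflTransGen.single (Or.inl hab)
  have hreach : ∀ n, Relation.ReflTransGen T.E r n →
      Relation.ReflTransGen E' ⟨r, Ne.symm hjr⟩ (φ n) := by
    intro n hn
    induction hn with
    | refl => rw [hφn r (Ne.symm hjr)]
    | tail _ he ih => exact ih.trans (femb _ _ he)
  refine ⟨{ N := {k : T.N // k ≠ j}
            E := E'
            label := fun k => T.label k.1
            isTree := ?_
            mono := ?_ }, Equiv.refl _, fun k l => Iff.rfl, fun k => rfl, ?_⟩
  · -- isTree
    refine ⟨⟨r, Ne.symm hjr⟩, ?_, ?_, ?_⟩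
    · intro n
      have := hreach n.1 (hr n.1)
      rwa [hφn n.1 n.2, Subtype.coe_eta] at this
    · rintro ⟨n, hnj⟩ hne
      have hnr' : n ≠ r := fun h => hne (Subtype.ext h)
      obtain ⟨m, hm, hmu⟩ := hu n hnr'
      by_cases hmj : m = j
      · subst hmj
        refine ⟨⟨i, hij⟩, Or.inr ⟨rfl, hm⟩, ?_⟩
        rintro ⟨k, hkj⟩ (hk | ⟨hk, -⟩)
        · exact absurd (hmu k hk) hkj
        · exact Subtype.ext hk
      · refine ⟨⟨m, hmj⟩, Or.inl hm, ?_⟩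
        rintro ⟨k, hkj⟩ (hk | ⟨-, hk⟩)
        · exact Subtype.ext (hmu k hk)
        · exact absurd (hmu j hk).symm hmj
    · rintro ⟨n, hnj⟩ (hn | ⟨-, hn⟩)
      · exact hnr n hn
      · exact hnr j hn
  · -- mono
    rintro ⟨a, haj⟩ ⟨b, hbj⟩ (h | ⟨ha, h⟩)
    · exact T.mono _ _ h
    · calc T.label a = T.label j := by rw [show a = i from ha]; exact hlab
        _ ≤ T.label b := T.mono _ _ h
  · -- TreeEquiv, first direction
    constructor
    · refine ⟨φ, femb, ?_⟩
      intro k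
      by_cases hkj : k = j
      · subst hkj; rw [hφj]; exact hlab.symm
      · rw [hφn k hkj]
    · refine ⟨Subtype.val, ?_, fun k => rfl⟩
      rintro ⟨a, haj⟩ ⟨b, hbj⟩ (h | ⟨ha, h⟩)
      · exact Relation.ReflTransGen.single h
      · exact (Relation.ReflTransGen.single (show T.E a j from (show a = i from ha) ▸ hE)).tail h
end

section
/- If a strict P-labelled tree contains a triplicate (i,j,k), i.e., k E i, k E j, i ≠ j, and the subtrees rooted at i and at j are P-isomorphic, then removing the subtree rooted at j yields a strict P-labelled tree on a strictly smaller node set that is ∼-equivalent to the original. -/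
/-- removing the subtree rooted at `j` from a strict tree containing
a triplicate `(i,j,k)` yields a strict tree on a strictly smaller node set that
is `∼`-equivalent to the original. -/
theorem stmt4 (P : Type) [Fintype P] [PartialOrder P] (T : PTree P)
    (hstrict : StrictTree T) (i j k : T.N)
    (h1 : T.E k i) (h2 : T.E k j) (hij : i ≠ j) (hiso : SubIso T i j) :
    ∃ (T' : PTree P) (e : T'.N ≃ {n : T.N // ¬ Relation.ReflTransGen T.E j n}),
      StrictTree T' ∧
      (∀ a b : T'.N, T'.E a b ↔ T.E (e a).1 (e b).1) ∧
      (∀ a : T'.N, T'.label a = T.label (e a).1) ∧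
      TreeEquiv T T' := by
  classical
  haveI := T.fin
  obtain ⟨r, hreach, huniq, hroot⟩ := T.isTree
  -- labels are monotone along directed paths
  have hmono : ∀ {a b : T.N}, Relation.ReflTransGen T.E a b → T.label a ≤ T.label b := by
    intro a b h
    induction h with
    | refl => exact le_refl _
    | tail _ h ih => exact ih.trans (T.mono _ _ h)
  -- no cycles through an edge
  have hnocyc : ∀ {a b : T.N}, T.E a b → ¬ Relation.ReflTransGen T.E b a := by
    intro a b h hba
    exact (hstrict a b h).not_ge (hmono hba)
  -- any two ancestors of a node are comparable
  have hcomp : ∀ {a n : T.N}, Relation.ReflTransGen T.E a n →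
      ∀ {b : T.N}, Relation.ReflTransGen T.E b n →
      Relation.ReflTransGen T.E a b ∨ Relation.ReflTransGen T.E b a := by
    intro a n han
    induction han with
    | refl => intro b hbn; exact Or.inr hbn
    | @tail m n hm hmn ih =>
      intro b hbn
      rcases hbn.cases_tail with h | ⟨m', hbm', hm'n⟩
      · exact Or.inl (h ▸ hm.tail hmn)
      · have hnr : n ≠ r := fun h => hroot m (h ▸ hmn)
        obtain ⟨u, hu, huu⟩ := huniq n hnr
        have hm' : m' = m := by rw [huu m' hm'n, huu m hmn]
        exact ih (hm' ▸ hbm')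
  have hjr : j ≠ r := fun h => hroot k (h ▸ h2)
  have hir : i ≠ r := fun h => hroot k (h ▸ h1)
  -- unique parents of i and j
  have hparj : ∀ m, T.E m j → m = k := by
    obtain ⟨u, _, huu⟩ := huniq j hjr
    intro m hm; rw [huu m hm, huu k h2]
  have hpari : ∀ m, T.E m i → m = k := by
    obtain ⟨u, _, huu⟩ := huniq i hir
    intro m hm; rw [huu m hm, huu k h1]
  -- disjointness of the two subtrees
  have hdisj : ∀ n : T.N, Relation.ReflTransGen T.E i n →
      ¬ Relation.ReflTransGen T.E j n := by
    intro n hin hjn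
    rcases hcomp hin hjn with hij' | hji'
    · rcases hij'.cases_tail with h | ⟨m, him, hmj⟩
      · exact hij (by cases h; rfl)
      · exact hnocyc h1 ((hparj m hmj) ▸ him)
    · rcases hji'.cases_tail with h | ⟨m, hjm, hmi⟩
      · exact hij (by cases h; rfl)
      · exact hnocyc h2 ((hpari m hmi) ▸ hjm)
  obtain ⟨g, hgE, hgL⟩ := hiso
  -- the isomorphism sends root to root
  have hgroot : g ⟨i, Relation.ReflTransGen.refl⟩ = ⟨j, Relation.ReflTransGen.refl⟩ := by
    set b := g ⟨i, Relation.ReflTransGen.refl⟩ with hb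
    by_contra hbj
    have hbj' : b.1 ≠ j := fun h => hbj (Subtype.ext h)
    rcases b.2.cases_tail with h | ⟨m, hjm, hmb⟩
    · exact hbj' h
    · set x := g.symm ⟨m, hjm⟩ with hx
      have hE : T.E x.1 i := by
        have := (hgE x ⟨i, Relation.ReflTransGen.refl⟩).mpr
        rw [hx, Equiv.apply_symm_apply, ← hb] at this
        exact this hmb
      have : x.1 = k := hpari _ hE
      exact hnocyc h1 (this ▸ x.2)
  have hgsymm : g.symm ⟨j, Relation.ReflTransGen.refl⟩ = ⟨i, Relation.ReflTransGen.refl⟩ := by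
    rw [← hgroot, Equiv.symm_apply_apply]
  -- root survives the removal
  have hjnr : ¬ Relation.ReflTransGen T.E j r := by
    intro h
    rcases h.cases_tail with h | ⟨m, _, hm⟩
    · exact hroot k (h ▸ h2)
    · exact hroot m hm
  -- reachability within the complement
  have hreach' : ∀ {n : T.N}, Relation.ReflTransGen T.E r n →
      ∀ (hn : ¬ Relation.ReflTransGen T.E j n),
      Relation.ReflTransGen
        (fun a b : {n : T.N // ¬ Relation.ReflTransGen T.E j n} => T.E a.1 b.1)
        ⟨r, hjnr⟩ ⟨n, hn⟩ := by
    intro n h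
    induction h with
    | refl => intro hn; exact Relation.ReflTransGen.refl
    | @tail m n hm hmn ih =>
      intro hn
      have hm' : ¬ Relation.ReflTransGen T.E j m := fun hj => hn (hj.tail hmn)
      exact Relation.ReflTransGen.tail (ih hm')
        (show T.E (⟨m, hm'⟩ : {n : T.N // ¬ _}).1 n from hmn)
  -- the pruned tree
  refine ⟨PTree.mk {n : T.N // ¬ Relation.ReflTransGen T.E j n}
      (fun a b => T.E a.1 b.1) (fun a => T.label a.1)
      ⟨⟨r, hjnr⟩, ?_, ?_, ?_⟩ (fun a b h => T.mono _ _ h),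
      Equiv.refl _, fun a b h => hstrict _ _ h, fun a b => Iff.rfl,
      fun a => rfl, ?_, ?_⟩
  · rintro ⟨n, hn⟩; exact hreach' (hreach n) hn
  · rintro ⟨n, hn⟩ hne
    have hnr : n ≠ r := fun h => hne (Subtype.ext h)
    obtain ⟨m, hm, hmu⟩ := huniq n hnr
    have hmn : ¬ Relation.ReflTransGen T.E j m := fun h => hn (h.tail hm)
    exact ⟨⟨m, hmn⟩, hm, fun y hy => Subtype.ext (hmu y.1 hy)⟩
  · rintro ⟨n, hn⟩ h; exact hroot n h
  -- embedding of T into T'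
  · refine ⟨fun n =>
      if h : Relation.ReflTransGen T.E j n then
        ⟨(g.symm ⟨n, h⟩).1, hdisj _ (g.symm ⟨n, h⟩).2⟩
      else ⟨n, h⟩, ?_, ?_⟩
    · intro a b hab
      by_cases ha : Relation.ReflTransGen T.E j a
      · have hb : Relation.ReflTransGen T.E j b := ha.tail hab
        simp only [dif_pos ha, dif_pos hb]
        refine Relation.ReflTransGen.single ?_
        have := (hgE (g.symm ⟨a, ha⟩) (g.symm ⟨b, hb⟩)).mpr
        rw [Equiv.apply_symm_apply, Equiv.apply_symm_apply] at this
        exact this hab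
      · by_cases hb : Relation.ReflTransGen T.E j b
        · -- then b = j and a = k
          have hbj : b = j := by
            rcases hb.cases_tail with h | ⟨m, hjm, hmb⟩
            · exact h
            · exfalso
              have hbr : b ≠ r := fun h => hroot a (h ▸ hab)
              obtain ⟨u, _, huu⟩ := huniq b hbr
              have : a = m := by rw [huu a hab, huu m hmb]
              exact ha (this ▸ hjm)
          subst hbj
          have hak : a = k := hparj a hab
          simp only [dif_neg ha, dif_pos hb]
          refine Relation.ReflTransGen.single ?_
          show T.E a (g.symm ⟨b, hb⟩).1
          have : (⟨b, hb⟩ : {n : T.N // Relation.ReflTransGen T.E b n}) =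
              ⟨b, Relation.ReflTransGen.refl⟩ := rfl
          rw [this, hgsymm]
          exact hak ▸ h1
        · simp only [dif_neg ha, dif_neg hb]
          exact Relation.ReflTransGen.single hab
    · intro n
      by_cases h : Relation.ReflTransGen T.E j n
      · simp only [dif_pos h]
        have := hgL (g.symm ⟨n, h⟩)
        rw [Equiv.apply_symm_apply] at this
        exact this.symm
      · simp only [dif_neg h]
  -- embedding of T' into T
  · exact ⟨fun a => a.1, fun a b h => Relation.ReflTransGen.single h, fun a => rfl⟩
end

section
/- The formula □(p∨q) → ((◇p → □q) → □q) is valid in every downward confluent frame. -/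
/-- Formulas of intuitionistic modal logic. -/
inductive Fo : Type
  | atom : ℕ → Fo
  | impl : Fo → Fo → Fo
  | top : Fo
  | bot : Fo
  | and : Fo → Fo → Fo
  | or : Fo → Fo → Fo
  | box : Fo → Fo
  | dia : Fo → Fo

/-- A frame: a nonempty set of worlds with a preorder `le` and a relation `rel`. -/
structure Frame where
  W : Type
  ne : Nonempty W
  le : W → W → Prop
  rel : W → W → Prop
  le_refl : ∀ s, le s s
  le_trans : ∀ s t u, le s t → le t u → le s u

/-- A valuation assigns `≤`-closed sets of worlds to atoms. -/
def ClosedVal (F : Frame) (V : ℕ → F.W → Prop) : Prop :=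
  ∀ p s t, V p s → F.le s t → V p t

/-- Božić–Došen satisfaction. -/
def Sat (F : Frame) (V : ℕ → F.W → Prop) : F.W → Fo → Prop
  | s, .atom p => V p s
  | s, .impl A B => ∀ t, F.le s t → Sat F V t A → Sat F V t B
  | _, .top => True
  | _, .bot => False
  | s, .and A B => Sat F V s A ∧ Sat F V s B
  | s, .or A B => Sat F V s A ∨ Sat F V s B
  | s, .box A => ∀ t, F.rel s t → Sat F V t A
  | s, .dia A => ∃ t, F.rel s t ∧ Sat F V t A

/-- Downward confluence. -/
def DownConf (F : Frame) : Prop :=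
  ∀ s t u, F.le s t → F.rel t u → ∃ v, F.rel s v ∧ F.le v u

/-- Forward confluence. -/
def ForwConf (F : Frame) : Prop :=
  ∀ s t u, F.le t s → F.rel t u → ∃ v, F.rel s v ∧ F.le u v

/-- `□(p∨q) → ((◇p → □q) → □q)` is valid in every downward
confluent frame. -/
theorem stmt9 (F : Frame) (hD : DownConf F)
    (V : ℕ → F.W → Prop) (hV : ClosedVal F V) (s : F.W) :
    Sat F V s (.impl (.box (.or (.atom 0) (.atom 1)))
      (.impl (.impl (.dia (.atom 0)) (.box (.atom 1))) (.box (.atom 1)))) := by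
  intro t hst hbox u htu himp w huw
  obtain ⟨v, htv, hvw⟩ := hD t u w htu huw
  rcases hbox v htv with hp | hq
  · exact himp u (F.le_refl u) ⟨w, huw, hV 0 v w hp hvw⟩ w huw
  · exact hV 1 v w hq hvw
end

section
/- In any model based on a downward confluent and forward confluent frame, the Božić–Došen satisfaction relation coincides with the Fischer Servi satisfaction relation, which interprets □A at s as: for all t ≥ s and all u with t R u, u satisfies A. -/
/-- Fischer Servi satisfaction: as Božić–Došen, except that `□A` holds at `s`
iff `A` holds at every `R`-successor of every `≤`-successor of `s`. -/
def SatFS (F : Frame) (V : ℕ → F.W → Prop) : F.W → Fo → Prop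
  | s, .atom p => V p s
  | s, .impl A B => ∀ t, F.le s t → SatFS F V t A → SatFS F V t B
  | _, .top => True
  | _, .bot => False
  | s, .and A B => SatFS F V s A ∧ SatFS F V s B
  | s, .or A B => SatFS F V s A ∨ SatFS F V s B
  | s, .box A => ∀ t, F.le s t → ∀ u, F.rel t u → SatFS F V u A
  | s, .dia A => ∃ t, F.rel s t ∧ SatFS F V t A


theorem satMono (F : Frame) (hD : DownConf F) (hF : ForwConf F)
    (V : ℕ → F.W → Prop) (hV : ClosedVal F V) (A : Fo) :
    ∀ s t : F.W, F.le s t → Sat F V s A → Sat F V t A := by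
  induction A with
  | atom p => intro s t hst h; exact hV p s t h hst
  | impl A B ihA ihB =>
      intro s t hst h u htu hA
      exact h u (F.le_trans s t u hst htu) hA
  | top => intro s t _ _; trivial
  | bot => intro s t _ h; exact h
  | and A B ihA ihB => intro s t hst h; exact ⟨ihA s t hst h.1, ihB s t hst h.2⟩
  | or A B ihA ihB =>
      intro s t hst h
      cases h with
      | inl h => exact Or.inl (ihA s t hst h)
      | inr h => exact Or.inr (ihB s t hst h)
  | box A ih =>
      intro s t hst h u htu
      obtain ⟨v, hsv, hvu⟩ := hD s t u hst htu
      exact ih v u hvu (h v hsv)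
  | dia A ih =>
      intro s t hst h
      obtain ⟨u, hsu, hu⟩ := h
      obtain ⟨v, htv, huv⟩ := hF t s u hst hsu
      exact ⟨v, htv, ih u v huv hu⟩

/-- on downward and forward confluent frames, the Božić–Došen
and the Fischer Servi satisfaction relations coincide. -/
theorem stmt14 (F : Frame) (hD : DownConf F) (hF : ForwConf F)
    (V : ℕ → F.W → Prop) (hV : ClosedVal F V) (A : Fo) (s : F.W) :
    Sat F V s A ↔ SatFS F V s A := by
  induction A generalizing s with
  | atom p => exact Iff.rfl
  | impl A B ihA ihB =>
      constructor
      · intro h t hst hA; exact (ihB t).1 (h t hst ((ihA t).2 hA))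
      · intro h t hst hA; exact (ihB t).2 (h t hst ((ihA t).1 hA))
  | top => exact Iff.rfl
  | bot => exact Iff.rfl
  | and A B ihA ihB =>
      constructor
      · intro h; exact ⟨(ihA s).1 h.1, (ihB s).1 h.2⟩
      · intro h; exact ⟨(ihA s).2 h.1, (ihB s).2 h.2⟩
  | or A B ihA ihB =>
      constructor
      · rintro (h | h); exacts [Or.inl ((ihA s).1 h), Or.inr ((ihB s).1 h)]
      · rintro (h | h); exacts [Or.inl ((ihA s).2 h), Or.inr ((ihB s).2 h)]
  | box A ih =>
      constructor
      · intro h t hst u htu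
        obtain ⟨v, hsv, hvu⟩ := hD s t u hst htu
        exact (ih u).1 (satMono F hD hF V hV A v u hvu (h v hsv))
      · intro h t hst
        exact (ih t).2 (h s (F.le_refl s) t hst)
  | dia A ih =>
      constructor
      · rintro ⟨t, hst, h⟩; exact ⟨t, hst, (ih t).1 h⟩
      · rintro ⟨t, hst, h⟩; exact ⟨t, hst, (ih t).2 h⟩
end

section
/- For any regular clip (𝒯, ≪, ▷), the frame (𝒯, ≪*, ▷⁺) is upward confluent: if x (▷⁺) y and z (≪*) y then there exists w with w (≪*) x and w (▷⁺) z. -/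
/-- A tip: an index, a world of the canonical frame, a rank and a height. -/
abbrev Tip (W : Type) := ℕ × W × ℕ × ℕ

/-- A clip: a finite nonempty set of tips together with two relations on it. -/
structure Clip (W : Type) where
  T : Set (Tip W)
  finite : T.Finite
  nonempty : T.Nonempty
  ll : Tip W → Tip W → Prop
  rr : Tip W → Tip W → Prop
  ll_mem : ∀ a b, ll a b → a ∈ T ∧ b ∈ T
  rr_mem : ∀ a b, rr a b → a ∈ T ∧ b ∈ T

/-- Coherence of a clip with respect to the canonical preorder `lec` and the
canonical accessibility relation `Rc`. -/
def Coherent {W : Type} (lec Rc : W → W → Prop) (C : Clip W) : Prop :=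
  (∀ a b, a ∈ C.T → b ∈ C.T → a.1 = b.1 → a = b) ∧
  (∀ a b, C.ll a b →
    b.1 ≠ a.1 ∧ lec a.2.1 b.2.1 ∧ b.2.2.1 = a.2.2.1 ∧ b.2.2.2 = a.2.2.2 + 1) ∧
  (∀ a b, C.rr a b →
    b.1 ≠ a.1 ∧ Rc a.2.1 b.2.1 ∧ b.2.2.1 = a.2.2.1 + 1 ∧ b.2.2.2 = a.2.2.2)

/-- Regularity of a coherent clip. -/
def Regular {W : Type} (lec Rc : W → W → Prop) (C : Clip W) : Prop :=
  Coherent lec Rc C ∧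
  (∀ a b c, C.ll a c → C.ll b c → a.1 = b.1) ∧
  (∀ a b c, C.rr a c → C.rr b c → a.1 = b.1) ∧
  (∀ a b c, C.rr a b → C.ll c b → ∃ d, C.ll d a ∧ C.rr d c)

lemma step_lift {W : Type} (C : Clip W)
    (sq : ∀ a b c, C.rr a b → C.ll c b → ∃ d, C.ll d a ∧ C.rr d c)
    {x y z : Tip W} (h1 : Relation.TransGen C.rr x y) (h2 : C.ll z y) :
    ∃ w : Tip W, C.ll w x ∧ Relation.TransGen C.rr w z := by
  induction h1 generalizing z with
  | single h =>
    obtain ⟨d, hd1, hd2⟩ := sq _ _ _ h h2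
    exact ⟨d, hd1, Relation.TransGen.single hd2⟩
  | tail _ h ih =>
    obtain ⟨d, hd1, hd2⟩ := sq _ _ _ h h2
    obtain ⟨w, hw1, hw2⟩ := ih hd1
    exact ⟨w, hw1, hw2.tail hd2⟩

/-- for a regular clip, the frame `(𝒯, ≪*, ▷⁺)` is upward
confluent. -/
theorem stmt16 {W : Type} (lec Rc : W → W → Prop)
    (C : Clip W) (hC : Regular lec Rc C) (x y z : Tip W)
    (h1 : Relation.TransGen C.rr x y) (h2 : Relation.ReflTransGen C.ll z y) :
    ∃ w : Tip W, Relation.ReflTransGen C.ll w x ∧ Relation.TransGen C.rr w z := by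
  induction h2 using Relation.ReflTransGen.head_induction_on generalizing x with
  | refl => exact ⟨x, Relation.ReflTransGen.refl, h1⟩
  | head h _ ih =>
    obtain ⟨w, hw1, hw2⟩ := ih x h1
    obtain ⟨w', hw'1, hw'2⟩ := step_lift C hC.2.2.2 hw2 h
    exact ⟨w', Relation.ReflTransGen.head hw'1 hw1, hw'2⟩
end

section
/- Let (𝒯, ≪, ▷) be a regular clip and ((i,s,α,X),(j,t,β,Y),(k,u,γ,Z)) a defect of downward confluence. Then no element of 𝒯 is a ≪-predecessor of (k,u,γ,Z). -/
/-- if `(a,b,c)` is a defect of downward confluence of a regular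
clip, then no tip of `𝒯` is a `≪`-predecessor of `c`. -/
theorem stmt17 {W : Type} (lec Rc : W → W → Prop)
    (C : Clip W) (hC : Regular lec Rc C) (a b c : Tip W)
    (h1 : C.ll a b) (h2 : C.rr b c)
    (h3 : ∀ d ∈ C.T, ¬ C.rr a d ∨ ¬ C.ll d c) :
    ∀ e ∈ C.T, ¬ C.ll e c := by
  intro e he hec
  obtain ⟨hcoh, hll_uniq, hrr_uniq, hconf⟩ := hC
  obtain ⟨d, hdb, hde⟩ := hconf b c e h2 hec
  have hidx : d.1 = a.1 := hll_uniq d a b hdb h1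
  have hda : d = a := hcoh.1 d a (C.ll_mem d b hdb).1 (C.ll_mem a b h1).1 hidx
  rcases h3 e he with h | h
  · exact h (hda ▸ hde)
  · exact h hec
end
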